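/- If the loss φ is bounded by c, then for any two perturbation kernels p₁ and p₂, the corresponding statistically robust risks differ by at most c times the expected total variation distance: |r^stat(p₁,f) − r^stat(p₂,f)| ≤ c · E_{(X,Y)∼p_D}[TV(p₁(·|X), p₂(·|X))]. -/

import Mathlib

open MeasureTheory ProbabilityTheory

/-- Total variation distance between two measures: `sup_A |μ(A) − ν(A)|`. -/
noncomputable def tvDist {𝒳 : Type*} [MeasurableSpace 𝒳] (μ ν : Measure 𝒳) : ℝ :=
  ⨆ A : {A : Set 𝒳 // MeasurableSet A}, |(μ A).toReal - (ν A).toReal|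

lemma tvDist_bddAbove {𝒳 : Type*} [MeasurableSpace 𝒳] (μ ν : Measure 𝒳)
    [IsProbabilityMeasure μ] [IsProbabilityMeasure ν] :
    BddAbove (Set.range fun A : {A : Set 𝒳 // MeasurableSet A} =>
      |(μ A).toReal - (ν A).toReal|) := by
  refine ⟨1, ?_⟩
  rintro x ⟨A, rfl⟩
  have h1 : (μ (A : Set 𝒳)).toReal ≤ 1 := by
    have := prob_le_one (μ := μ) (s := (A : Set 𝒳))
    simpa using ENNReal.toReal_le_of_le_ofReal one_pos.le (by simpa using this)
  have h2 : (ν (A : Set 𝒳)).toReal ≤ 1 := by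
    have := prob_le_one (μ := ν) (s := (A : Set 𝒳))
    simpa using ENNReal.toReal_le_of_le_ofReal one_pos.le (by simpa using this)
  have h3 : 0 ≤ (μ (A : Set 𝒳)).toReal := ENNReal.toReal_nonneg
  have h4 : 0 ≤ (ν (A : Set 𝒳)).toReal := ENNReal.toReal_nonneg
  rw [abs_sub_le_iff]
  constructor <;> linarith

lemma abs_measure_diff_le_tvDist {𝒳 : Type*} [MeasurableSpace 𝒳] (μ ν : Measure 𝒳)
    [IsProbabilityMeasure μ] [IsProbabilityMeasure ν] {A : Set 𝒳} (hA : MeasurableSet A) :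
    |(μ A).toReal - (ν A).toReal| ≤ tvDist μ ν :=
  le_ciSup (tvDist_bddAbove μ ν) ⟨A, hA⟩

lemma tvDist_nonneg {𝒳 : Type*} [MeasurableSpace 𝒳] (μ ν : Measure 𝒳)
    [IsProbabilityMeasure μ] [IsProbabilityMeasure ν] : 0 ≤ tvDist μ ν := by
  have := abs_measure_diff_le_tvDist μ ν (A := ∅) MeasurableSet.empty
  simpa using this.trans' (abs_nonneg _)

/-- Key pointwise bound: difference of integrals of a `[0,c]`-valued function against two
probability measures is at most `c` times the total variation distance. -/
lemma integral_diff_le_tvDist {𝒳 : Type*} [MeasurableSpace 𝒳] (μ ν : Measure 𝒳)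
    [IsProbabilityMeasure μ] [IsProbabilityMeasure ν] (g : 𝒳 → ℝ) (hg : Measurable g)
    (c : ℝ) (hc : 0 ≤ c) (hgb : ∀ x, g x ∈ Set.Icc (0 : ℝ) c) :
    |∫ x, g x ∂μ - ∫ x, g x ∂ν| ≤ c * tvDist μ ν := by
  -- integrability of g
  have hgnn : ∀ x, 0 ≤ g x := fun x => (hgb x).1
  have hgle : ∀ x, g x ≤ c := fun x => (hgb x).2
  have hgbd : ∀ x, ‖g x‖ ≤ c := fun x => by
    rw [Real.norm_eq_abs, abs_of_nonneg (hgnn x)]; exact hgle x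
  have hintμ : Integrable g μ :=
    Integrable.mono' (integrable_const c) hg.aestronglyMeasurable
      (Filter.Eventually.of_forall hgbd)
  have hintν : Integrable g ν :=
    Integrable.mono' (integrable_const c) hg.aestronglyMeasurable
      (Filter.Eventually.of_forall hgbd)
  -- layer cake
  rw [hintμ.integral_eq_integral_meas_lt (Filter.Eventually.of_forall hgnn),
    hintν.integral_eq_integral_meas_lt (Filter.Eventually.of_forall hgnn)]
  set Fμ : ℝ → ℝ := fun t => (μ {a | t < g a}).toReal with hFμ
  set Fν : ℝ → ℝ := fun t => (ν {a | t < g a}).toReal with hFν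
  have hset : ∀ t : ℝ, MeasurableSet {a | t < g a} := fun t =>
    measurableSet_lt measurable_const hg
  have hFμm : Measurable Fμ := by
    have hanti : Antitone fun t : ℝ => μ {a | t < g a} := by
      intro s t hst
      exact measure_mono (fun a ha => lt_of_le_of_lt hst ha)
    exact hanti.measurable.ennreal_toReal
  have hFνm : Measurable Fν := by
    have hanti : Antitone fun t : ℝ => ν {a | t < g a} := by
      intro s t hst
      exact measure_mono (fun a ha => lt_of_le_of_lt hst ha)
    exact hanti.measurable.ennreal_toReal
  have hFμ01 : ∀ t, Fμ t ∈ Set.Icc (0:ℝ) 1 := by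
    intro t
    refine ⟨ENNReal.toReal_nonneg, ?_⟩
    simpa using ENNReal.toReal_le_of_le_ofReal one_pos.le (by simpa using prob_le_one (μ := μ))
  have hFν01 : ∀ t, Fν t ∈ Set.Icc (0:ℝ) 1 := by
    intro t
    refine ⟨ENNReal.toReal_nonneg, ?_⟩
    simpa using ENNReal.toReal_le_of_le_ofReal one_pos.le (by simpa using prob_le_one (μ := ν))
  have hFμ0 : ∀ t ∈ Set.Ioi c, Fμ t = 0 := by
    intro t ht
    have : {a | t < g a} = ∅ := by
      ext a; simp only [Set.mem_setOf_eq, Set.mem_empty_iff_false, iff_false, not_lt]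
      exact (hgle a).trans (le_of_lt ht)
    simp [hFμ, this]
  have hFν0 : ∀ t ∈ Set.Ioi c, Fν t = 0 := by
    intro t ht
    have : {a | t < g a} = ∅ := by
      ext a; simp only [Set.mem_setOf_eq, Set.mem_empty_iff_false, iff_false, not_lt]
      exact (hgle a).trans (le_of_lt ht)
    simp [hFν, this]
  -- integrability of the layer functions on Ioi 0
  have hIoi : Set.Ioi (0:ℝ) = Set.Ioc 0 c ∪ Set.Ioi c := by
    rw [Set.Ioc_union_Ioi_eq_Ioi hc]
  have intOn : ∀ (F : ℝ → ℝ), Measurable F → (∀ t, F t ∈ Set.Icc (0:ℝ) 1) →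
      (∀ t ∈ Set.Ioi c, F t = 0) → IntegrableOn F (Set.Ioi 0) := by
    intro F hFm hF01 hF0
    rw [hIoi]
    refine IntegrableOn.union ?_ ?_
    · refine Integrable.mono' (integrable_const 1) hFm.aestronglyMeasurable ?_
      refine Filter.Eventually.of_forall fun t => ?_
      rw [Real.norm_eq_abs, abs_of_nonneg (hF01 t).1]; exact (hF01 t).2
    · refine (integrable_zero _ _ _).congr ?_
      have : ∀ᵐ t ∂(volume.restrict (Set.Ioi c)), t ∈ Set.Ioi c :=
        ae_restrict_mem measurableSet_Ioi
      filter_upwards [this] with t ht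
      exact (hF0 t ht).symm
  have hIμ : IntegrableOn Fμ (Set.Ioi 0) := intOn Fμ hFμm hFμ01 hFμ0
  have hIν : IntegrableOn Fν (Set.Ioi 0) := intOn Fν hFνm hFν01 hFν0
  change |(∫ t in Set.Ioi 0, Fμ t) - ∫ t in Set.Ioi 0, Fν t| ≤ c * tvDist μ ν
  rw [← integral_sub hIμ hIν]
  -- split the integral
  have hdisj : Disjoint (Set.Ioc (0:ℝ) c) (Set.Ioi c) := by
    exact Set.Ioc_disjoint_Ioi le_rfl
  have hsplit := setIntegral_union (f := fun t => Fμ t - Fν t) (μ := volume) hdisj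
    measurableSet_Ioi
    (IntegrableOn.mono_set (hIμ.sub hIν) (by rw [hIoi]; exact Set.subset_union_left))
    (IntegrableOn.mono_set (hIμ.sub hIν) (by rw [hIoi]; exact Set.subset_union_right))
  rw [← hIoi] at hsplit
  have hzero : ∫ t in Set.Ioi c, (Fμ t - Fν t) = 0 :=
    setIntegral_eq_zero_of_forall_eq_zero fun t ht => by
      rw [hFμ0 t ht, hFν0 t ht, sub_zero]
  rw [hsplit, hzero, add_zero]
  have hbound : ∀ t ∈ Set.Ioc (0:ℝ) c, ‖Fμ t - Fν t‖ ≤ tvDist μ ν := by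
    intro t _
    rw [Real.norm_eq_abs]
    exact abs_measure_diff_le_tvDist μ ν (hset t)
  have := norm_setIntegral_le_of_norm_le_const (μ := volume) (f := fun t => Fμ t - Fν t)
    (C := tvDist μ ν) (s := Set.Ioc (0:ℝ) c) measure_Ioc_lt_top hbound
  rw [Real.norm_eq_abs] at this
  refine this.trans ?_
  rw [measureReal_def, Real.volume_Ioc, ENNReal.toReal_ofReal (by linarith)]
  have : c - 0 = c := by ring
  rw [this, mul_comm]

/-- if the loss is bounded by `c`, the statistically robust risks under two
perturbation kernels differ by at most `c` times the expected total variation distance. -/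
theorem srr_tv_stability
    {d M : ℕ} {𝒴 : Type*} [MeasurableSpace 𝒴]
    (pD : Measure ((Fin d → ℝ) × 𝒴)) [IsProbabilityMeasure pD]
    (κ₁ κ₂ : Kernel (Fin d → ℝ) (Fin d → ℝ)) [IsMarkovKernel κ₁] [IsMarkovKernel κ₂]
    (f : (Fin d → ℝ) → (Fin M → ℝ)) (hf : Measurable f)
    (φ : (Fin M → ℝ) → 𝒴 → ℝ)
    (hφm : Measurable (Function.uncurry φ))
    (c : ℝ) (hc : 0 ≤ c)
    (hφb : ∀ a y, φ a y ∈ Set.Icc (0 : ℝ) c)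
    (htv : Integrable (fun xy : (Fin d → ℝ) × 𝒴 => tvDist (κ₁ xy.1) (κ₂ xy.1)) pD) :
    |(∫ xy, (∫ x', φ (f x') xy.2 ∂(κ₁ xy.1)) ∂pD)
        - (∫ xy, (∫ x', φ (f x') xy.2 ∂(κ₂ xy.1)) ∂pD)|
      ≤ c * ∫ xy, tvDist (κ₁ xy.1) (κ₂ xy.1) ∂pD := by
  set F₁ : ((Fin d → ℝ) × 𝒴) → ℝ := fun xy => ∫ x', φ (f x') xy.2 ∂(κ₁ xy.1) with hF₁
  set F₂ : ((Fin d → ℝ) × 𝒴) → ℝ := fun xy => ∫ x', φ (f x') xy.2 ∂(κ₂ xy.1) with hF₂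
  -- strong measurability of F₁, F₂
  have hmeas : ∀ (κ : Kernel (Fin d → ℝ) (Fin d → ℝ)), IsMarkovKernel κ →
      StronglyMeasurable (fun xy : (Fin d → ℝ) × 𝒴 => ∫ x', φ (f x') xy.2 ∂(κ xy.1)) := by
    intro κ hκ
    let η : Kernel ((Fin d → ℝ) × 𝒴) (Fin d → ℝ) := κ.comap Prod.fst measurable_fst
    have hη : IsMarkovKernel η := by
      constructor
      intro a
      simp only [η, Kernel.comap_apply]
      exact hκ.isProbabilityMeasure a.1
    have hh : Measurable (fun p : ((Fin d → ℝ) × 𝒴) × (Fin d → ℝ) => φ (f p.2) p.1.2) := by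
      have : (fun p : ((Fin d → ℝ) × 𝒴) × (Fin d → ℝ) => φ (f p.2) p.1.2)
          = Function.uncurry φ ∘ fun p => (f p.2, p.1.2) := rfl
      rw [this]
      exact hφm.comp ((hf.comp measurable_snd).prodMk measurable_fst.snd)
    have h2 := hh.stronglyMeasurable.integral_kernel_prod_right' (κ := η)
    have heq : (fun xy : (Fin d → ℝ) × 𝒴 => ∫ x', φ (f x') xy.2 ∂(κ xy.1))
        = fun xy => ∫ x', φ (f (xy, x').2) (xy, x').1.2 ∂(η xy) := by
      funext xy
      simp [η, Kernel.comap_apply]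
    rw [heq]
    exact h2
  have hφbd : ∀ (z : Fin M → ℝ) (y : 𝒴), ‖φ z y‖ ≤ c := by
    intro z y
    rw [Real.norm_eq_abs, abs_of_nonneg (hφb z y).1]
    exact (hφb z y).2
  -- boundedness of F₁ F₂
  have hFbd : ∀ (κ : Kernel (Fin d → ℝ) (Fin d → ℝ)) [IsMarkovKernel κ]
      (xy : (Fin d → ℝ) × 𝒴), ‖∫ x', φ (f x') xy.2 ∂(κ xy.1)‖ ≤ c := by
    intro κ hκ xy
    have := norm_integral_le_of_norm_le_const (μ := κ xy.1)
      (Filter.Eventually.of_forall fun x' => hφbd (f x') xy.2)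
    simpa using this
  have hint : ∀ (κ : Kernel (Fin d → ℝ) (Fin d → ℝ)), IsMarkovKernel κ →
      Integrable (fun xy : (Fin d → ℝ) × 𝒴 => ∫ x', φ (f x') xy.2 ∂(κ xy.1)) pD := by
    intro κ hκ
    exact Integrable.mono' (integrable_const c) (hmeas κ hκ).aestronglyMeasurable
      (Filter.Eventually.of_forall (hFbd κ))
  have hint₁ : Integrable F₁ pD := hint κ₁ inferInstance
  have hint₂ : Integrable F₂ pD := hint κ₂ inferInstance
  rw [← integral_sub hint₁ hint₂]
  have habs : |∫ xy, (F₁ xy - F₂ xy) ∂pD| ≤ ∫ xy, |F₁ xy - F₂ xy| ∂pD := by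
    simpa [Real.norm_eq_abs] using
      norm_integral_le_integral_norm (μ := pD) (f := fun xy => F₁ xy - F₂ xy)
  refine habs.trans ?_
  rw [← integral_const_mul]
  refine integral_mono (hint₁.sub hint₂).abs (htv.const_mul c) fun xy => ?_
  exact integral_diff_le_tvDist (κ₁ xy.1) (κ₂ xy.1)
    (fun x' => φ (f x') xy.2)
    (hφm.comp (hf.prodMk measurable_const)) c hc (fun x' => hφb (f x') xy.2)
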